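/- For every graph G with maximum degree Δ and every integer s ≥ 2, the vertex set of G can be partitioned into s-1 parts such that the subgraph induced by each part has maximum degree at most ⌊Δ/(s-1)⌋. -/
import Mathlib

open Finset

section aux
variable {V : Type} [Fintype V] [DecidableEq V] (G : SimpleGraph V) [DecidableRel G.Adj]
  {k : ℕ}

/-- number of neighbors of `v` colored `i`. -/
private def dd (c : V → Fin k) (v : V) (i : Fin k) : ℕ :=
  ((G.neighborFinset v).filter fun w => c w = i).card

/-- total (ordered) monochromatic adjacency count. -/
private def ff (c : V → Fin k) : ℕ := ∑ v, dd G c v (c v)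

private lemma key (c : V → Fin k) (v : V) (i : Fin k) :
    ff G (Function.update c v i) + 2 * dd G c v (c v) = ff G c + 2 * dd G c v i := by
  classical
  set c' := Function.update c v i with hc'
  have pointwise : ∀ u,
      dd G c' u (c' u) + (if v ∈ G.neighborFinset u ∧ c v = c u ∧ u ≠ v then 1 else 0)
        + (if u = v then dd G c v (c v) else 0)
      = dd G c u (c u) + (if v ∈ G.neighborFinset u ∧ i = c u ∧ u ≠ v then 1 else 0)
        + (if u = v then dd G c v i else 0) := by
    intro u
    by_cases huv : u = v
    · subst huv
      have h1 : dd G c' u (c' u) = dd G c u i := by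
        have hcu : c' u = i := Function.update_self _ _ _
        rw [hcu]
        unfold dd
        apply congrArg
        apply Finset.filter_congr
        intro w hw
        have hne : w ≠ u := by
          rw [SimpleGraph.mem_neighborFinset] at hw
          exact hw.ne'
        rw [hc', Function.update_of_ne hne]
      simp only [if_neg (fun h : (u:V) ≠ u => h rfl)]
      simp [h1]
      omega
    · have hcu : c' u = c u := Function.update_of_ne huv _ _
      simp only [if_neg huv]
      by_cases hv : v ∈ G.neighborFinset u
      · have hsplit : G.neighborFinset u = insert v ((G.neighborFinset u).erase v) :=
          (Finset.insert_erase hv).symm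
        have hvE : v ∉ (G.neighborFinset u).erase v := Finset.notMem_erase _ _
        have hsame : ((G.neighborFinset u).erase v).filter (fun w => c' w = c u)
            = ((G.neighborFinset u).erase v).filter (fun w => c w = c u) := by
          apply Finset.filter_congr
          intro w hw
          rw [hc', Function.update_of_ne (Finset.ne_of_mem_erase hw)]
        have h1 : dd G c' u (c' u)
            = (if c' v = c u then 1 else 0)
              + (((G.neighborFinset u).erase v).filter fun w => c w = c u).card := by
          unfold dd
          rw [hcu, hsplit, Finset.filter_insert]
          by_cases hpv : c' v = c u
          · rw [if_pos hpv, Finset.card_insert_of_notMem (fun h => hvE (Finset.mem_of_mem_filter _ h)),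
              hsame, if_pos hpv, Finset.erase_insert hvE]
            omega
          · rw [if_neg hpv, hsame, if_neg hpv, Finset.erase_insert hvE]
            omega
        have h2 : dd G c u (c u)
            = (if c v = c u then 1 else 0)
              + (((G.neighborFinset u).erase v).filter fun w => c w = c u).card := by
          unfold dd
          rw [hsplit, Finset.filter_insert]
          by_cases hpv : c v = c u
          · rw [if_pos hpv, Finset.card_insert_of_notMem (fun h => hvE (Finset.mem_of_mem_filter _ h)),
              if_pos hpv, Finset.erase_insert hvE]
            omega
          · rw [if_neg hpv, if_neg hpv, Finset.erase_insert hvE]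
            omega
        have hcv : c' v = i := Function.update_self _ _ _
        rw [h1, h2, hcv]
        simp only [hv, true_and, Ne, huv, Ne.symm huv, not_false_iff, and_true]
        by_cases h3 : c v = c u <;> by_cases h4 : i = c u <;> simp [h3, h4] <;> omega
      · have h1 : dd G c' u (c' u) = dd G c u (c u) := by
          unfold dd
          rw [hcu]
          apply congrArg
          apply Finset.filter_congr
          intro w hw
          have : w ≠ v := fun h => hv (h ▸ hw)
          rw [hc', Function.update_of_ne this]
        simp [h1, hv]
  have hsum := Finset.sum_congr rfl (fun u (_ : u ∈ (univ : Finset V)) => pointwise u)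
  rw [Finset.sum_add_distrib, Finset.sum_add_distrib, Finset.sum_add_distrib,
    Finset.sum_add_distrib] at hsum
  have e1 : ∀ (j : Fin k), (∑ u, if v ∈ G.neighborFinset u ∧ j = c u ∧ u ≠ v then 1 else 0)
      = dd G c v j := by
    intro j
    rw [← Finset.card_filter]
    unfold dd
    congr 1
    ext u
    simp only [Finset.mem_filter, Finset.mem_univ, true_and, SimpleGraph.mem_neighborFinset]
    constructor
    · rintro ⟨h1, h2, _⟩; exact ⟨h1.symm, h2.symm⟩
    · rintro ⟨h1, h2⟩; exact ⟨h1.symm, h2.symm, h1.ne'⟩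
  have e2 : ∀ (n : ℕ), (∑ u, if u = v then n else 0) = n := by
    intro n; simp
  rw [e1, e1, e2, e2] at hsum
  unfold ff
  omega
end aux

/-- For every graph G of maximum degree at most Δ and every s ≥ 2, the vertex set
can be partitioned into s-1 parts (given by a coloring with s-1 colors) such that
each part induces a subgraph of maximum degree at most ⌊Δ/(s-1)⌋. -/
theorem stmt_4 {V : Type} [Fintype V] [DecidableEq V] (G : SimpleGraph V)
    [DecidableRel G.Adj] (Δ s : ℕ) (hs : 2 ≤ s)
    (hdeg : ∀ v, G.degree v ≤ Δ) :
    ∃ c : V → Fin (s - 1),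
      ∀ v, ((G.neighborFinset v).filter fun w => c w = c v).card ≤ Δ / (s - 1) := by
  classical
  set k := s - 1 with hk
  have hkpos : 0 < k := by omega
  haveI : Nonempty (Fin k) := ⟨⟨0, hkpos⟩⟩
  obtain ⟨c, hc⟩ := Finite.exists_min (ff G (k := k))
  refine ⟨c, fun v => ?_⟩
  by_contra hcon
  push_neg at hcon
  have hcon' : Δ / k < dd G c v (c v) := hcon
  -- there is a color with few neighbors
  have hex : ∃ i : Fin k, dd G c v i ≤ Δ / k := by
    by_contra hall
    push_neg at hall
    have hsum : ∑ i : Fin k, dd G c v i = G.degree v := by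
      rw [SimpleGraph.degree, Finset.card_eq_sum_card_fiberwise
        (f := c) (t := (univ : Finset (Fin k))) (fun x _ => Finset.mem_univ _)]
      rfl
    have hlb : (Δ / k + 1) * k ≤ ∑ i : Fin k, dd G c v i := by
      calc (Δ / k + 1) * k = ∑ _i : Fin k, (Δ / k + 1) := by
            rw [Finset.sum_const, Finset.card_univ, Fintype.card_fin, smul_eq_mul, mul_comm]
          _ ≤ ∑ i : Fin k, dd G c v i := Finset.sum_le_sum fun i _ => hall i
    have : (Δ / k + 1) * k ≤ Δ := le_trans (hlb.trans_eq hsum) (hdeg v)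
    have := (Nat.le_div_iff_mul_le hkpos).2 this
    omega
  obtain ⟨i, hi⟩ := hex
  have hkey := key G c v i
  have hmin := hc (Function.update c v i)
  omega
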